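/- arXiv:1012.4856 — 3 statements merged into one kernel-verified Lean document; each statement's English description precedes it below -/
import Mathlib

section
/- Let G be a connected simple graph on n ≥ 3 vertices with Randić index R, algebraic connectivity a, and diameter D. If D ≤ 2(n - 3 + 2√2)/π², then R/a ≤ ((n - 3 + 2√2)/2) / (2(1 - cos(π/n))). -/
open Finset Real Matrix

section helpers

variable {V : Type*} [Fintype V] (G : SimpleGraph V) [DecidableRel G.Adj]

lemma sum_dart_eq_twice_sum_edge (f : Sym2 V → ℝ) :
    ∑ d : G.Dart, f d.edge = 2 * ∑ e ∈ G.edgeFinset, f e := by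
  classical
  rw [← Finset.sum_fiberwise_of_maps_to (g := SimpleGraph.Dart.edge)
    (fun d _ => SimpleGraph.mem_edgeFinset.2 d.edge_mem) (fun d => f d.edge)]
  rw [Finset.mul_sum]
  refine Finset.sum_congr rfl fun e he => ?_
  rw [Finset.sum_congr rfl (fun d hd => by
    rw [(Finset.mem_filter.1 hd).2]), Finset.sum_const]
  rw [G.dart_edge_fiber_card e (SimpleGraph.mem_edgeFinset.1 he)]
  simp [two_mul]

lemma double_sum_adj_eq_sum_dart (f : V → V → ℝ) :
    ∑ i, ∑ j, (if G.Adj i j then f i j else 0) = ∑ d : G.Dart, f d.fst d.snd := by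
  classical
  rw [← Finset.sum_product', ← Finset.sum_filter]
  refine (Finset.sum_bij (fun (d : G.Dart) _ => d.toProd) ?_ ?_ ?_ ?_).symm
  · intro d _; simp [d.adj]
  · intro a _ b _ h; exact SimpleGraph.Dart.ext _ _ h
  · intro p hp
    exact ⟨⟨p, (Finset.mem_filter.1 hp).2⟩, Finset.mem_univ _, rfl⟩
  · intro d _; rfl

lemma sum_edge_eq_half (f : V → V → ℝ) (hf : ∀ u v, f u v = f v u) :
    ∑ e ∈ G.edgeFinset, Sym2.lift ⟨f, hf⟩ e
      = (∑ i, ∑ j, if G.Adj i j then f i j else 0) / 2 := by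
  rw [double_sum_adj_eq_sum_dart]
  have : ∀ d : G.Dart, f d.fst d.snd = Sym2.lift ⟨f, hf⟩ d.edge := by
    intro d; rw [SimpleGraph.Dart.edge]; exact (Sym2.lift_mk ⟨f, hf⟩ d.toProd.1 d.toProd.2).symm
  rw [Finset.sum_congr rfl fun d _ => this d, sum_dart_eq_twice_sum_edge]
  ring

lemma one_div_sqrt_mul_le {a b : ℝ} (ha : 0 < a) (hb : 0 < b) :
    1 / Real.sqrt (a * b) ≤ 1 / (2 * a) + 1 / (2 * b) := by
  have hsa := Real.sqrt_nonneg a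
  have hsb := Real.sqrt_nonneg b
  have ha2 : Real.sqrt a ^ 2 = a := Real.sq_sqrt ha.le
  have hb2 : Real.sqrt b ^ 2 = b := Real.sq_sqrt hb.le
  have hsa' : 0 < Real.sqrt a := Real.sqrt_pos.2 ha
  have hsb' : 0 < Real.sqrt b := Real.sqrt_pos.2 hb
  rw [Real.sqrt_mul ha.le, div_add_div _ _ (by positivity) (by positivity),
    div_le_div_iff₀ (by positivity) (by positivity)]
  nlinarith [sq_nonneg (Real.sqrt a - Real.sqrt b), mul_pos hsa' hsb', mul_pos ha hb]

lemma inner_adj_sum (i : V) (c : ℝ) :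
    ∑ j, (if G.Adj i j then c else 0) = (G.degree i : ℝ) * c := by
  classical
  rw [← Finset.sum_filter]
  rw [show Finset.univ.filter (G.Adj i) = G.neighborFinset i from (G.neighborFinset_eq_filter).symm]
  rw [Finset.sum_const, SimpleGraph.card_neighborFinset_eq_degree]
  simp [mul_comm]

lemma randic_le_half_card (hdeg : ∀ v, 0 < G.degree v) :
    ∑ e ∈ G.edgeFinset,
      Sym2.lift ⟨fun u v => 1 / Real.sqrt ((G.degree u : ℝ) * (G.degree v : ℝ)),
        fun u v => by simp [mul_comm]⟩ e ≤ (Fintype.card V : ℝ) / 2 := by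
  rw [sum_edge_eq_half]
  have key : ∑ i, ∑ j, (if G.Adj i j then 1 / Real.sqrt ((G.degree i : ℝ) * (G.degree j : ℝ)) else 0)
      ≤ (Fintype.card V : ℝ) := by
    have h1 : ∀ i j : V, (if G.Adj i j then 1 / Real.sqrt ((G.degree i : ℝ) * (G.degree j : ℝ)) else 0)
        ≤ (if G.Adj i j then 1 / (2 * (G.degree i : ℝ)) else 0)
          + (if G.Adj i j then 1 / (2 * (G.degree j : ℝ)) else 0) := by
      intro i j
      by_cases h : G.Adj i j
      · simp only [if_pos h]
        exact one_div_sqrt_mul_le (by exact_mod_cast hdeg i) (by exact_mod_cast hdeg j)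
      · simp [h]
    calc ∑ i, ∑ j, (if G.Adj i j then 1 / Real.sqrt ((G.degree i : ℝ) * (G.degree j : ℝ)) else 0)
        ≤ ∑ i, ∑ j, ((if G.Adj i j then 1 / (2 * (G.degree i : ℝ)) else 0)
          + (if G.Adj i j then 1 / (2 * (G.degree j : ℝ)) else 0)) :=
          Finset.sum_le_sum fun i _ => Finset.sum_le_sum fun j _ => h1 i j
      _ = (Fintype.card V : ℝ) := by
          simp only [Finset.sum_add_distrib]
          have e1 : ∑ i, ∑ j, (if G.Adj i j then 1 / (2 * (G.degree i : ℝ)) else 0)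
              = (Fintype.card V : ℝ) / 2 := by
            have h2 := fun i => inner_adj_sum G i (1 / (2 * (G.degree i : ℝ)))
            rw [Finset.sum_congr rfl fun i _ => h2 i]
            have h3 : ∀ i : V, (G.degree i : ℝ) * (1 / (2 * (G.degree i : ℝ))) = 1 / 2 := by
              intro i
              have : (G.degree i : ℝ) ≠ 0 := by
                exact_mod_cast (hdeg i).ne'
              field_simp
            rw [Finset.sum_congr rfl fun i _ => h3 i]
            simp [Finset.card_univ]
            ring
          have e2 : ∑ i, ∑ j, (if G.Adj i j then 1 / (2 * (G.degree j : ℝ)) else 0)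
              = (Fintype.card V : ℝ) / 2 := by
            rw [Finset.sum_comm]
            rw [Finset.sum_congr rfl fun j _ => Finset.sum_congr rfl fun i _ => by
              rw [if_congr (G.adj_comm i j) rfl rfl]]
            exact e1
          rw [e1, e2]; ring
  linarith

lemma connected_degree_pos (hG : G.Connected) (h : 1 < Fintype.card V) (v : V) :
    0 < G.degree v := by
  rw [SimpleGraph.degree_pos_iff_exists_adj]
  obtain ⟨u, hu⟩ := Fintype.exists_ne_of_one_lt_card h v
  obtain ⟨p⟩ := hG.preconnected v u
  cases p with
  | nil => exact absurd rfl hu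
  | cons h' _ => exact ⟨_, h'⟩

lemma list_sq_sum (l : List ℝ) : l.sum ^ 2 ≤ (l.length : ℝ) * (l.map (· ^ 2)).sum := by
  induction l with
  | nil => simp
  | cons a l ih =>
    rcases l with _ | ⟨b, l'⟩
    · simp
    · set l := b :: l'
      have hlen : (1 : ℝ) ≤ (l.length : ℝ) := by
        simp [l]
      have ht : 0 ≤ (l.map (· ^ 2)).sum := by
        apply List.sum_nonneg
        intro x hx
        obtain ⟨y, _, rfl⟩ := List.mem_map.1 hx
        positivity
      simp only [List.sum_cons, List.length_cons, List.map_cons, Nat.cast_add, Nat.cast_one]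
      nlinarith [sq_nonneg (a * (l.length : ℝ) - l.sum), ih, sq_nonneg a]

lemma walk_telescope {G : SimpleGraph V} (x : V → ℝ) {u w : V} (p : G.Walk u w) :
    (p.darts.map (fun d => x d.fst - x d.snd)).sum = x u - x w := by
  induction p with
  | nil => simp
  | cons h p ih => simp [SimpleGraph.Walk.darts_cons, ih]

lemma path_sq_sum_le {G : SimpleGraph V} [DecidableRel G.Adj]
    (x : V → ℝ) {u w : V} (p : G.Walk u w) (hp : p.IsPath) :
    (p.darts.map (fun d => (x d.fst - x d.snd) ^ 2)).sum
      ≤ ∑ e ∈ G.edgeFinset,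
          Sym2.lift ⟨fun i j => (x i - x j) ^ 2, fun i j => by ring_nf⟩ e := by
  classical
  set f : Sym2 V → ℝ := Sym2.lift ⟨fun i j => (x i - x j) ^ 2, fun i j => by ring_nf⟩ with hf
  have h1 : (p.darts.map (fun d => (x d.fst - x d.snd) ^ 2)) = p.edges.map f := by
    rw [SimpleGraph.Walk.edges, List.map_map]
    refine List.map_congr_left fun d _ => ?_
    obtain ⟨⟨a, b⟩, hab⟩ := d
    simp [hf, SimpleGraph.Dart.edge, Sym2.lift_mk]
  rw [h1, ← List.sum_toFinset _ hp.edges_nodup]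
  refine Finset.sum_le_sum_of_subset_of_nonneg ?_ ?_
  · intro e he
    exact SimpleGraph.mem_edgeFinset.2 (p.edges_subset_edgeSet (List.mem_toFinset.1 he))
  · intro e _ _
    induction e with
    | _ i j => simp [hf]; positivity

lemma lap_quad_lower {n : ℕ} (hn : 3 ≤ n) (G : SimpleGraph (Fin n)) [DecidableRel G.Adj]
    (hG : G.Connected) (x : Fin n → ℝ) (hx : x ≠ 0) (hs : ∑ i, x i = 0) :
    4 / ((n : ℝ) * G.diam) * (x ⬝ᵥ x) ≤ x ⬝ᵥ (G.lapMatrix ℝ *ᵥ x) := by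
  have hn' : (3 : ℝ) ≤ (n : ℝ) := by exact_mod_cast hn
  set Q := x ⬝ᵥ (G.lapMatrix ℝ *ᵥ x) with hQdef
  have hQ : Q = ∑ e ∈ G.edgeFinset,
      Sym2.lift ⟨fun i j => (x i - x j) ^ 2, fun i j => by ring_nf⟩ e := by
    rw [hQdef, ← Matrix.toLinearMap₂'_apply', SimpleGraph.lapMatrix_toLinearMap₂',
      sum_edge_eq_half]
  obtain ⟨u, -, hu⟩ := Finset.exists_max_image Finset.univ x ⟨⟨0, by omega⟩, Finset.mem_univ _⟩
  obtain ⟨w, -, hw⟩ := Finset.exists_min_image Finset.univ x ⟨⟨0, by omega⟩, Finset.mem_univ _⟩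
  have hM : 0 < x u := by
    by_contra h
    push_neg at h
    have h0 : ∀ i ∈ Finset.univ, x i ≤ 0 := fun i hi => (hu i hi).trans h
    have := (Finset.sum_eq_zero_iff_of_nonpos h0).1 hs
    exact hx (funext fun i => this i (Finset.mem_univ i))
  have hm : x w < 0 := by
    by_contra h
    push_neg at h
    have h0 : ∀ i ∈ Finset.univ, 0 ≤ x i := fun i hi => h.trans (hw i hi)
    have := (Finset.sum_eq_zero_iff_of_nonneg h0).1 hs
    exact hx (funext fun i => this i (Finset.mem_univ i))
  have huw : u ≠ w := fun h => by rw [h] at hM; linarith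
  have hvar : x ⬝ᵥ x ≤ (n : ℝ) * (x u * (-(x w))) := by
    rw [dotProduct]
    calc ∑ i, x i * x i ≤ ∑ i, ((x u + x w) * x i - x u * x w) :=
          Finset.sum_le_sum fun i hi => by nlinarith [hu i hi, hw i hi]
      _ = (x u + x w) * (∑ i, x i) - (n : ℝ) * (x u * x w) := by
          rw [Finset.sum_sub_distrib, ← Finset.mul_sum, Finset.sum_const, Finset.card_univ]
          simp
      _ = (n : ℝ) * (x u * (-(x w))) := by rw [hs]; ring
  have hne : G.ediam ≠ ⊤ := by
    have : Nonempty (Fin n) := ⟨⟨0, by omega⟩⟩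
    obtain ⟨a, b, hab⟩ := SimpleGraph.exists_edist_eq_ediam_of_finite (G := G)
    rw [← hab]
    exact SimpleGraph.edist_ne_top_iff_reachable.2 (hG.preconnected a b)
  have hdistle : G.dist u w ≤ G.diam := SimpleGraph.dist_le_diam hne
  have hdist1 : 0 < G.dist u w := (hG.preconnected u w).pos_dist_of_ne huw
  have hdiam1 : 1 ≤ G.diam := hdist1.trans_le hdistle
  have hD1 : (1 : ℝ) ≤ (G.diam : ℝ) := by exact_mod_cast hdiam1
  obtain ⟨p, hpath, hplen⟩ := hG.exists_path_of_dist u w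
  have hlen : (p.length : ℝ) ≤ (G.diam : ℝ) := by
    exact_mod_cast hplen ▸ hdistle
  set l := p.darts.map (fun d => x d.fst - x d.snd) with hl
  have hsq0 : 0 ≤ (p.darts.map (fun d => (x d.fst - x d.snd) ^ 2)).sum := by
    apply List.sum_nonneg
    intro y hy
    obtain ⟨d, -, rfl⟩ := List.mem_map.1 hy
    positivity
  have h5 : (x u - x w) ^ 2 ≤ (G.diam : ℝ) * Q := by
    have e1 : l.sum = x u - x w := walk_telescope x p
    have e2 : l.map (· ^ 2) = p.darts.map (fun d => (x d.fst - x d.snd) ^ 2) := by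
      rw [hl, List.map_map]; rfl
    have e3 : (l.length : ℝ) = (p.length : ℝ) := by
      rw [hl, List.length_map, SimpleGraph.Walk.length_darts]
    have hcs := list_sq_sum l
    rw [e1, e2, e3] at hcs
    calc (x u - x w) ^ 2 ≤ (p.length : ℝ) * (p.darts.map (fun d => (x d.fst - x d.snd) ^ 2)).sum :=
          hcs
      _ ≤ (G.diam : ℝ) * (p.darts.map (fun d => (x d.fst - x d.snd) ^ 2)).sum :=
          mul_le_mul_of_nonneg_right hlen hsq0
      _ ≤ (G.diam : ℝ) * Q := by
          apply mul_le_mul_of_nonneg_left _ (by linarith)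
          rw [hQ]
          exact path_sq_sum_le x p hpath
  have hQ0 : 0 ≤ Q := by nlinarith [sq_nonneg (x u - x w)]
  rw [div_mul_eq_mul_div, div_le_iff₀ (by positivity)]
  nlinarith [hvar, h5, sq_nonneg (x u + x w), mul_le_mul_of_nonneg_left h5 (by linarith : (0:ℝ) ≤ (n:ℝ)),
    mul_le_mul_of_nonneg_left hvar (by norm_num : (0:ℝ) ≤ 4), mul_nonneg hQ0 (by linarith : (0:ℝ) ≤ (G.diam : ℝ))]

end helpers
/-- The Randić index of a finite simple graph:
`R(G) = ∑_{uv ∈ E(G)} 1/√(d(u)·d(v))`. -/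
noncomputable def randicIndex {V : Type*} [Fintype V] (G : SimpleGraph V) : ℝ :=
  letI : DecidableRel G.Adj := Classical.decRel _
  ∑ e ∈ G.edgeFinset,
    Sym2.lift ⟨fun u v => 1 / Real.sqrt ((G.degree u : ℝ) * (G.degree v : ℝ)),
      fun u v => by simp [mul_comm]⟩ e

/-- The algebraic connectivity of a graph on `Fin n`: the second smallest eigenvalue
of the Laplacian matrix, characterized (via Courant–Fischer, since the all-ones vector
is an eigenvector of the smallest eigenvalue `0`) as the infimum of the Rayleigh
quotient over nonzero vectors orthogonal to the all-ones vector. -/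
noncomputable def algebraicConnectivity {n : ℕ} (G : SimpleGraph (Fin n)) : ℝ :=
  letI : DecidableRel G.Adj := Classical.decRel _
  sInf {r : ℝ | ∃ x : Fin n → ℝ, x ≠ 0 ∧ (∑ i, x i) = 0 ∧
    r = (x ⬝ᵥ ((G.lapMatrix ℝ).mulVec x)) / (x ⬝ᵥ x)}

/-- The edge connectivity of a graph: the least number of edges whose deletion
disconnects the graph. -/
noncomputable def edgeConnectivity {V : Type*} [Fintype V] (G : SimpleGraph V) : ℕ :=
  sInf {k : ℕ | ∃ s : Set (Sym2 V), s ⊆ G.edgeSet ∧ s.ncard = k ∧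
    ¬ (G.deleteEdges s).Connected}

/-- The star `K_{1,n-1}` on vertex set `Fin n`: vertex `0` is adjacent to all others. -/
def starGraph (n : ℕ) : SimpleGraph (Fin n) where
  Adj i j := i ≠ j ∧ ((i : ℕ) = 0 ∨ (j : ℕ) = 0)
  symm := ⟨fun i j h => ⟨h.1.symm, h.2.symm⟩⟩
  loopless := ⟨fun i h => h.1 rfl⟩

theorem randic_over_algConn_le_of_diam_small
    {n : ℕ} (hn : 3 ≤ n) (G : SimpleGraph (Fin n)) (hG : G.Connected)
    (hD : (G.diam : ℝ) ≤ 2 * ((n : ℝ) - 3 + 2 * Real.sqrt 2) / Real.pi ^ 2) :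
    randicIndex G / algebraicConnectivity G ≤
      (((n : ℝ) - 3 + 2 * Real.sqrt 2) / 2) / (2 * (1 - Real.cos (Real.pi / n))) := by
  letI : DecidableRel G.Adj := Classical.decRel _
  have hn' : (3 : ℝ) ≤ (n : ℝ) := by exact_mod_cast hn
  have hn0 : (n : ℝ) ≠ 0 := by positivity
  have hπ : 0 < Real.pi := Real.pi_pos
  set A : ℝ := (n : ℝ) - 3 + 2 * Real.sqrt 2 with hAdef
  have hA : 0 < A := by
    have h2 : 0 < Real.sqrt 2 := Real.sqrt_pos.2 (by norm_num)
    rw [hAdef]; linarith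
  -- diameter facts
  have hne : G.ediam ≠ ⊤ := by
    have : Nonempty (Fin n) := ⟨⟨0, by omega⟩⟩
    obtain ⟨a, b, hab⟩ := SimpleGraph.exists_edist_eq_ediam_of_finite (G := G)
    rw [← hab]
    exact SimpleGraph.edist_ne_top_iff_reachable.2 (hG.preconnected a b)
  have hi01 : (⟨0, by omega⟩ : Fin n) ≠ ⟨1, by omega⟩ := by
    intro h; simpa using congrArg Fin.val h
  have hdiam1 : 1 ≤ G.diam :=
    le_trans ((hG.preconnected _ _).pos_dist_of_ne hi01) (SimpleGraph.dist_le_diam hne)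
  have hD1 : (1 : ℝ) ≤ (G.diam : ℝ) := by exact_mod_cast hdiam1
  set D : ℝ := (G.diam : ℝ) with hDdef
  -- Randić index bound
  have hdeg : ∀ v, 0 < G.degree v :=
    connected_degree_pos G hG (by simp [Fintype.card_fin]; omega)
  have hR : randicIndex G ≤ (n : ℝ) / 2 := by
    have := randic_le_half_card G hdeg
    rw [Fintype.card_fin] at this
    exact this
  have hR0 : 0 ≤ randicIndex G := by
    unfold randicIndex
    refine Finset.sum_nonneg fun e _ => ?_
    induction e with
    | _ i j => simp; positivity
  -- algebraic connectivity lower bound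
  set c : ℝ := 4 / ((n : ℝ) * D) with hcdef
  have hc0 : 0 < c := by rw [hcdef]; positivity
  have ha : c ≤ algebraicConnectivity G := by
    unfold algebraicConnectivity
    apply le_csInf
    · -- nonempty
      refine ⟨_, Pi.single (⟨0, by omega⟩ : Fin n) (1 : ℝ) - Pi.single ⟨1, by omega⟩ 1,
        ?_, ?_, rfl⟩
      · intro h
        have := congrFun h ⟨0, by omega⟩
        simp [Pi.single_eq_same, Pi.single_eq_of_ne hi01.symm] at this
      · simp only [Pi.sub_apply]
        rw [Finset.sum_sub_distrib]
        simp [Finset.sum_pi_single']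
    · rintro r ⟨x, hx, hsum, rfl⟩
      have hxx : 0 < x ⬝ᵥ x := by
        have h0 : 0 ≤ x ⬝ᵥ x := by
          rw [dotProduct]
          exact Finset.sum_nonneg fun i _ => mul_self_nonneg _
        rcases h0.lt_or_eq with h | h
        · exact h
        · exact absurd ((dotProduct_self_eq_zero).1 h.symm) hx
      rw [le_div_iff₀ hxx]
      have := lap_quad_lower hn G hG x hx hsum
      calc c * (x ⬝ᵥ x) = 4 / ((n : ℝ) * G.diam) * (x ⬝ᵥ x) := by rw [hcdef, hDdef]
        _ ≤ x ⬝ᵥ (G.lapMatrix ℝ *ᵥ x) := this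
  have ha0 : 0 < algebraicConnectivity G := lt_of_lt_of_le hc0 ha
  -- cosine bounds
  have habs : |Real.pi / n| ≤ Real.pi := by
    rw [abs_of_pos (by positivity)]
    exact div_le_self hπ.le (by exact_mod_cast (by omega : 1 ≤ n))
  have hcos1 : 0 < 1 - Real.cos (Real.pi / n) := by
    have h := Real.cos_le_one_sub_mul_cos_sq habs
    have hterm : 0 < 2 / Real.pi ^ 2 * (Real.pi / n) ^ 2 := by positivity
    linarith
  have hcosub : (n : ℝ) ^ 2 * (1 - Real.cos (Real.pi / n)) ≤ Real.pi ^ 2 / 2 := by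
    have h := Real.one_sub_sq_div_two_le_cos (x := Real.pi / n)
    have e : ((n : ℝ)) ^ 2 * ((Real.pi / n) ^ 2 / 2) = Real.pi ^ 2 / 2 := by
      field_simp
    nlinarith [sq_nonneg (n : ℝ)]
  -- final chain
  have hmain : randicIndex G / algebraicConnectivity G ≤ ((n : ℝ) / 2) / c :=
    div_le_div₀ (by positivity) hR hc0 ha
  have heq : ((n : ℝ) / 2) / c = (n : ℝ) ^ 2 * D / 8 := by
    rw [hcdef]
    field_simp
    ring
  have hfin : (n : ℝ) ^ 2 * D / 8 ≤ (A / 2) / (2 * (1 - Real.cos (Real.pi / n))) := by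
    rw [div_le_div_iff₀ (by norm_num) (by positivity)]
    have hDpi : D * Real.pi ^ 2 ≤ 2 * A := by
      have := (le_div_iff₀ (by positivity : (0:ℝ) < Real.pi ^ 2)).1 hD
      linarith
    nlinarith [mul_le_mul_of_nonneg_left hcosub (by positivity : (0:ℝ) ≤ 2 * D),
      mul_le_mul_of_nonneg_left hDpi (by norm_num : (0:ℝ) ≤ 1), hA, hD1, hcos1]
  calc randicIndex G / algebraicConnectivity G ≤ ((n : ℝ) / 2) / c := hmain
    _ = (n : ℝ) ^ 2 * D / 8 := heq
    _ ≤ (A / 2) / (2 * (1 - Real.cos (Real.pi / n))) := hfin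
end

section
/- Let G be a connected simple graph on n vertices with algebraic connectivity a and edge connectivity κ'. Then a ≥ 2κ'(1 - cos(π/n)). -/
open Finset Real Matrix

noncomputable def pv (n k i : ℕ) : ℝ := Real.cos ((2*i+1) * (k * Real.pi / (2*n)))
noncomputable def plam (n k : ℕ) : ℝ := 2 * (1 - Real.cos (k * Real.pi / n))
noncomputable def pcc (n k j : ℕ) : ℝ :=
  if j = 0 then pv n k 0 - pv n k 1 else 2 * pv n k j - pv n k (j-1) - pv n k (j+1)

lemma trig1 (a : ℝ) : cos a - cos (3*a) = 2*(1 - cos (2*a)) * cos a := by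
  rw [show (3:ℝ)*a = 2*a + a by ring, Real.cos_add, Real.sin_two_mul, Real.cos_two_mul]
  linear_combination (2*Real.cos a) * (Real.sin_sq_add_cos_sq a)

lemma two_beta (n k : ℕ) (hn : n ≠ 0) : 2 * (k * Real.pi / (2*n)) = k * Real.pi / n := by
  field_simp

lemma pcc_eq (n k j : ℕ) (hn : n ≠ 0) : pcc n k j = plam n k * pv n k j := by
  set b := (k : ℝ) * Real.pi / (2*n) with hb
  cases j with
  | zero =>
    simp only [pcc, if_pos rfl, pv, plam]
    rw [← two_beta n k hn]
    push_cast
    rw [show (2*(0:ℝ)+1) * b = b by ring, show (2*(1:ℝ)+1) * b = 3*b by ring]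
    exact trig1 b
  | succ m =>
    simp only [pcc, if_neg (Nat.succ_ne_zero m), pv, plam, Nat.succ_sub_one]
    rw [← two_beta n k hn]
    push_cast
    have e1 : (2*((m:ℝ)+1)+1) * b = (2*m+3) * b := by ring
    have e2 : (2*(m:ℝ)+1) * b = ((2*m+3) * b) - 2*b := by ring
    have e3 : (2*((m:ℝ)+1+1)+1) * b = ((2*m+3) * b) + 2*b := by ring
    rw [e1, e2, e3, Real.cos_sub, Real.cos_add]
    ring

lemma pv_boundary (n k : ℕ) (hn : 2 ≤ n) :
    pv n k (n-1) - pv n k (n-2) = plam n k * pv n k (n-1) := by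
  obtain ⟨m, rfl⟩ : ∃ m, n = m + 2 := ⟨n - 2, by omega⟩
  set b := (k : ℝ) * Real.pi / (2*(m+2)) with hb
  have hkpi : (2*(m:ℝ)+4) * b = k * Real.pi := by
    rw [hb]; field_simp; ring
  have h1 : pv (m+2) k (m+1) = Real.cos (k * Real.pi) * Real.cos b := by
    unfold pv
    rw [show ((2*((m+1):ℕ)+1):ℝ) * ((k:ℝ) * Real.pi / (2*((m+2:ℕ):ℝ))) = k * Real.pi - b by
      push_cast [hb]; nlinarith [hkpi]]
    rw [Real.cos_sub, Real.sin_nat_mul_pi]; ring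
  have h2 : pv (m+2) k m = Real.cos (k * Real.pi) * Real.cos (3*b) := by
    unfold pv
    rw [show ((2*(m:ℕ)+1):ℝ) * ((k:ℝ) * Real.pi / (2*((m+2:ℕ):ℝ))) = k * Real.pi - 3*b by
      push_cast [hb]; nlinarith [hkpi]]
    rw [Real.cos_sub, Real.sin_nat_mul_pi]; ring
  have h3 : plam (m+2) k = 2*(1 - Real.cos (2*b)) := by
    unfold plam
    rw [← two_beta (m+2) k (by omega)]
    push_cast [hb]
    rfl
  simp only [show m+2-1 = m+1 from rfl, show m+2-2 = m from rfl, h1, h2, h3]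
  linear_combination (Real.cos ((k:ℝ)*Real.pi)) * trig1 b

lemma abel_sum (v y : ℕ → ℝ) (cc : ℕ → ℝ)
    (h0 : cc 0 = v 0 - v 1) (hj : ∀ m, cc (m+1) = 2 * v (m+1) - v m - v (m+2)) (m : ℕ) :
    ∑ i ∈ range m, (v (i+1) - v i) * (y (i+1) - y i)
      = (if m = 0 then 0 else (v m - v (m-1)) * y m) + ∑ j ∈ range m, cc j * y j := by
  induction m with
  | zero => simp
  | succ m ih =>
    rw [Finset.sum_range_succ, Finset.sum_range_succ, ih]
    rcases Nat.eq_zero_or_pos m with hm | hm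
    · subst hm; simp [h0]; ring
    · obtain ⟨m', rfl⟩ := Nat.exists_eq_succ_of_ne_zero hm.ne'
      simp only [Nat.succ_eq_add_one, Nat.add_sub_cancel, if_neg (Nat.succ_ne_zero _), hj]
      ring

lemma pv_eig (n k : ℕ) (hk : k < n) (y : ℕ → ℝ) :
    ∑ i ∈ range (n-1), (pv n k (i+1) - pv n k i) * (y (i+1) - y i)
      = plam n k * ∑ j ∈ range n, pv n k j * y j := by
  have hn0 : n ≠ 0 := by omega
  rw [abel_sum (pv n k) y (pcc n k) (by simp [pcc]) (fun m => by simp [pcc]) (n-1)]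
  rcases Nat.lt_or_ge n 2 with h2 | h2
  · -- n = 1, k = 0
    obtain rfl : n = 1 := by omega
    obtain rfl : k = 0 := by omega
    simp [plam, pcc, Finset.sum_range_succ]
  · obtain ⟨m, rfl⟩ : ∃ m, n = m + 2 := ⟨n - 2, by omega⟩
    simp only [show m+2-1 = m+1 from rfl, show m+1-1 = m from rfl, if_neg (Nat.succ_ne_zero m)]
    rw [Finset.sum_range_succ (fun j => pv (m+2) k j * y j) (m+1)]
    have hbd := pv_boundary (m+2) k (by omega)
    simp only [show m+2-1 = m+1 from rfl, show m+2-2 = m from rfl] at hbd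
    rw [hbd, mul_add, Finset.mul_sum]
    have hc : ∑ x ∈ range (m+1), pcc (m+2) k x * y x
        = ∑ x ∈ range (m+1), plam (m+2) k * (pv (m+2) k x * y x) :=
      Finset.sum_congr rfl fun j _ => by rw [pcc_eq (m+2) k j hn0]; ring
    rw [hc]; ring

lemma pv_sq_sum_pos (n k : ℕ) (hk : k < n) :
    0 < ∑ j ∈ range n, pv n k j * pv n k j := by
  have hn0 : (0:ℕ) < n := by omega
  have h0 : 0 < pv n k 0 := by
    unfold pv
    apply Real.cos_pos_of_mem_Ioo
    constructor
    · have : (0:ℝ) ≤ (2*(0:ℕ)+1) * ((k:ℝ) * Real.pi / (2*n)) := by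
        positivity
      linarith [Real.pi_pos]
    · push_cast
      rw [show (2*(0:ℝ)+1) * ((k:ℝ) * Real.pi / (2*n)) = (k:ℝ) * Real.pi / (2*n) by ring]
      rw [div_lt_iff₀ (by positivity)]
      have : (k:ℝ) < n := by exact_mod_cast hk
      nlinarith [Real.pi_pos]
  calc (0:ℝ) < pv n k 0 * pv n k 0 := by positivity
  _ ≤ ∑ j ∈ range n, pv n k j * pv n k j :=
      Finset.single_le_sum (f := fun j => pv n k j * pv n k j)
        (fun j _ => mul_self_nonneg _) (Finset.mem_range.mpr hn0)

lemma plam_inj (n : ℕ) {k l : ℕ} (hk : k ≤ n) (hl : l ≤ n) (h : plam n k = plam n l) : k = l := by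
  rcases Nat.eq_zero_or_pos n with rfl | hn
  · omega
  have hn0 : (0:ℝ) < n := by exact_mod_cast hn
  unfold plam at h
  have hcos : Real.cos ((k:ℝ) * Real.pi / n) = Real.cos ((l:ℝ) * Real.pi / n) := by linarith
  have hmem : ∀ m : ℕ, m ≤ n → (m:ℝ) * Real.pi / n ∈ Set.Icc 0 Real.pi := by
    intro m hm
    constructor
    · positivity
    · rw [div_le_iff₀ hn0]
      have : (m:ℝ) ≤ n := by exact_mod_cast hm
      nlinarith [Real.pi_pos]
  have := Real.injOn_cos (hmem k hk) (hmem l hl) hcos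
  have hπ : Real.pi ≠ 0 := Real.pi_ne_zero
  field_simp at this
  exact_mod_cast this

lemma pv_orth (n : ℕ) {k l : ℕ} (hk : k < n) (hl : l < n) (hkl : k ≠ l) :
    ∑ j ∈ range n, pv n k j * pv n l j = 0 := by
  have hn : 1 ≤ n := by omega
  have h1 := pv_eig n k hk (pv n l)
  have h2 := pv_eig n l hl (pv n k)
  have hsym : ∑ i ∈ range (n-1), (pv n k (i+1) - pv n k i) * (pv n l (i+1) - pv n l i)
      = ∑ i ∈ range (n-1), (pv n l (i+1) - pv n l i) * (pv n k (i+1) - pv n k i) := by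
    exact Finset.sum_congr rfl fun i _ => by ring
  have hsym2 : ∑ j ∈ range n, pv n l j * pv n k j = ∑ j ∈ range n, pv n k j * pv n l j := by
    exact Finset.sum_congr rfl fun j _ => by ring
  rw [hsym, h2, hsym2] at h1
  have hlam : plam n k ≠ plam n l := fun h => hkl (plam_inj n hk.le hl.le h)
  have : (plam n l - plam n k) * ∑ j ∈ range n, pv n k j * pv n l j = 0 := by linarith
  rcases mul_eq_zero.mp this with h | h
  · exact absurd (by linarith : plam n k = plam n l) hlam
  · exact h

noncomputable def pD (n k : ℕ) : ℝ := ∑ j ∈ range n, pv n k j * pv n k j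

noncomputable def pC (n : ℕ) : Matrix (Fin n) (Fin n) ℝ :=
  Matrix.of fun k i => pv n (k : ℕ) (i : ℕ)

lemma pC_mul_transpose (n : ℕ) :
    pC n * (pC n)ᵀ = Matrix.diagonal (fun k : Fin n => pD n k) := by
  ext k l
  rw [Matrix.mul_apply]
  simp only [pC, Matrix.transpose_apply, Matrix.of_apply, Matrix.diagonal_apply]
  rcases eq_or_ne k l with rfl | hkl
  · rw [if_pos rfl, pD, ← Fin.sum_univ_eq_sum_range (fun j => pv n k j * pv n k j) n]
  · rw [if_neg hkl, ← pv_orth n k.isLt l.isLt (fun h => hkl (Fin.val_injective h)),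
      ← Fin.sum_univ_eq_sum_range (fun j => pv n (k:ℕ) j * pv n (l:ℕ) j) n]

lemma pC_det_ne_zero (n : ℕ) : (pC n).det ≠ 0 := by
  intro h
  have h2 : ((pC n) * (pC n)ᵀ).det = 0 := by
    rw [Matrix.det_mul, h, zero_mul]
  rw [pC_mul_transpose, Matrix.det_diagonal] at h2
  have : ∀ k : Fin n, pD n k ≠ 0 := fun k => (pv_sq_sum_pos n k k.isLt).ne'
  exact (Finset.prod_ne_zero_iff.mpr (fun k _ => this k)) h2

lemma pv_expand (n : ℕ) (x : Fin n → ℝ) :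
    ∃ c : Fin n → ℝ, ∀ j : ℕ, ∀ h : j < n, x ⟨j, h⟩ = ∑ k : Fin n, c k * pv n (k:ℕ) j := by
  have hdet : IsUnit ((pC n)ᵀ).det := by
    rw [Matrix.det_transpose]
    exact isUnit_iff_ne_zero.mpr (pC_det_ne_zero n)
  refine ⟨((pC n)ᵀ)⁻¹ *ᵥ x, fun j hj => ?_⟩
  have h : (pC n)ᵀ *ᵥ (((pC n)ᵀ)⁻¹ *ᵥ x) = x := by
    rw [Matrix.mulVec_mulVec, Matrix.mul_nonsing_inv _ hdet, Matrix.one_mulVec]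
  conv_lhs => rw [← h]
  rw [Matrix.mulVec]
  simp only [dotProduct, Matrix.transpose_apply, pC, Matrix.of_apply]
  exact Finset.sum_congr rfl fun k _ => by ring

lemma pv_zero_eq_one (n j : ℕ) : pv n 0 j = 1 := by
  simp [pv]

lemma wirtinger (n : ℕ) (hn : 2 ≤ n) (x : Fin n → ℝ) (hsum : ∑ j, x j = 0)
    (X : ℕ → ℝ) (hX : ∀ (j : ℕ) (h : j < n), X j = x ⟨j, h⟩) :
    2 * (1 - Real.cos (Real.pi / n)) * ∑ j, x j * x j
      ≤ ∑ i ∈ range (n-1), (X (i+1) - X i)^2 := by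
  obtain ⟨c, hc⟩ := pv_expand n x
  have hXc : ∀ (j : ℕ), j < n → X j = ∑ k : Fin n, c k * pv n (k:ℕ) j := by
    intro j hj; rw [hX j hj, hc j hj]
  -- gap sum identity
  have gap_eq : ∑ i ∈ range (n-1), (X (i+1) - X i)^2
      = ∑ k : Fin n, (c k)^2 * (plam n k * pD n k) := by
    have step1 : ∀ i ∈ range (n-1), (X (i+1) - X i)^2
        = ∑ k : Fin n, ∑ l : Fin n, (c k * c l) *
            ((pv n (k:ℕ) (i+1) - pv n (k:ℕ) i) * (pv n (l:ℕ) (i+1) - pv n (l:ℕ) i)) := by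
      intro i hi
      rw [Finset.mem_range] at hi
      rw [hXc (i+1) (by omega), hXc i (by omega), ← Finset.sum_sub_distrib]
      rw [sq, Finset.sum_mul_sum]
      exact Finset.sum_congr rfl fun k _ => Finset.sum_congr rfl fun l _ => by ring
    rw [Finset.sum_congr rfl step1, Finset.sum_comm]
    refine Finset.sum_congr rfl fun k _ => ?_
    rw [Finset.sum_comm]
    have inner : ∀ l : Fin n, ∑ i ∈ range (n-1), (c k * c l) *
            ((pv n (k:ℕ) (i+1) - pv n (k:ℕ) i) * (pv n (l:ℕ) (i+1) - pv n (l:ℕ) i))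
        = (c k * c l) * (plam n (k:ℕ) * ∑ j ∈ range n, pv n (k:ℕ) j * pv n (l:ℕ) j) := by
      intro l
      rw [← Finset.mul_sum, pv_eig n (k:ℕ) k.isLt (pv n (l:ℕ))]
    rw [Finset.sum_congr rfl fun l _ => inner l]
    rw [Finset.sum_eq_single k]
    · rw [← pD]; ring
    · intro l _ hlk
      rw [pv_orth n k.isLt l.isLt (fun h => hlk (Fin.val_injective h).symm)]
      ring
    · intro h; exact absurd (Finset.mem_univ k) h
  -- norm identity
  have norm_eq : ∑ j, x j * x j = ∑ k : Fin n, (c k)^2 * pD n k := by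
    have : ∀ j : Fin n, x j * x j
        = ∑ k : Fin n, ∑ l : Fin n, (c k * c l) * (pv n (k:ℕ) (j:ℕ) * pv n (l:ℕ) (j:ℕ)) := by
      intro j
      have := hc (j:ℕ) j.isLt
      rw [Fin.eta] at this
      rw [this, Finset.sum_mul_sum]
      exact Finset.sum_congr rfl fun k _ => Finset.sum_congr rfl fun l _ => by ring
    rw [Finset.sum_congr rfl fun j _ => this j, Finset.sum_comm]
    refine Finset.sum_congr rfl fun k _ => ?_
    rw [Finset.sum_comm]
    have inner : ∀ l : Fin n, ∑ j : Fin n, (c k * c l) * (pv n (k:ℕ) (j:ℕ) * pv n (l:ℕ) (j:ℕ))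
        = (c k * c l) * ∑ j ∈ range n, pv n (k:ℕ) j * pv n (l:ℕ) j := by
      intro l
      rw [← Finset.mul_sum, ← Fin.sum_univ_eq_sum_range (fun j => pv n (k:ℕ) j * pv n (l:ℕ) j) n]
    rw [Finset.sum_congr rfl fun l _ => inner l]
    rw [Finset.sum_eq_single k]
    · rw [← pD]; ring
    · intro l _ hlk
      rw [pv_orth n k.isLt l.isLt (fun h => hlk (Fin.val_injective h).symm)]
      ring
    · intro h; exact absurd (Finset.mem_univ k) h
  -- c at index 0 vanishes
  have k0lt : (0:ℕ) < n := by omega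
  have c0 : c ⟨0, k0lt⟩ = 0 := by
    have hx0 : ∑ j, x j = ∑ k : Fin n, c k * ∑ j ∈ range n, pv n 0 j * pv n (k:ℕ) j := by
      have : ∀ j : Fin n, x j = ∑ k : Fin n, c k * pv n (k:ℕ) (j:ℕ) := by
        intro j
        have := hc (j:ℕ) j.isLt
        rwa [Fin.eta] at this
      rw [Finset.sum_congr rfl fun j _ => this j, Finset.sum_comm]
      refine Finset.sum_congr rfl fun k _ => ?_
      rw [← Finset.mul_sum, Fin.sum_univ_eq_sum_range (fun j => pv n (k:ℕ) j) n]
      congr 1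
      exact Finset.sum_congr rfl fun j _ => by rw [pv_zero_eq_one]; ring
    rw [hsum] at hx0
    rw [Finset.sum_eq_single ⟨0, k0lt⟩] at hx0
    · have hD : ∑ j ∈ range n, pv n 0 j * pv n ((⟨0,k0lt⟩ : Fin n):ℕ) j = pD n 0 := rfl
      rw [hD] at hx0
      have := (pv_sq_sum_pos n 0 k0lt).ne'
      rcases mul_eq_zero.mp hx0.symm with h | h
      · exact h
      · exact absurd h this
    · intro l _ hlk
      rw [pv_orth n k0lt l.isLt (fun h => hlk (Fin.val_injective h).symm), mul_zero]
    · intro h; exact absurd (Finset.mem_univ _) h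
  -- conclude
  have hplam1 : 2 * (1 - Real.cos (Real.pi / n)) = plam n 1 := by
    unfold plam; push_cast; rw [one_mul]
  rw [hplam1, gap_eq, norm_eq, Finset.mul_sum]
  apply Finset.sum_le_sum
  intro k _
  rcases eq_or_ne k ⟨0, k0lt⟩ with rfl | hk0
  · simp [c0]
  · have hk1 : 1 ≤ (k:ℕ) := by
      rcases Nat.eq_zero_or_pos (k:ℕ) with h | h
      · exact absurd (Fin.ext h : k = ⟨0,k0lt⟩) hk0
      · exact h
    have hn0 : (0:ℝ) < n := by positivity
    have hle : plam n 1 ≤ plam n (k:ℕ) := by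
      unfold plam
      have h1 : Real.cos ((k:ℝ) * Real.pi / n) ≤ Real.cos ((1:ℝ) * Real.pi / n) := by
        apply Real.cos_le_cos_of_nonneg_of_le_pi
        · positivity
        · rw [div_le_iff₀ hn0]
          have : ((k:ℕ):ℝ) ≤ n := by exact_mod_cast k.isLt.le
          nlinarith [Real.pi_pos]
        · apply (div_le_div_iff_of_pos_right hn0).mpr
          have hk : (1:ℝ) ≤ (k:ℕ) := by exact_mod_cast hk1
          nlinarith [Real.pi_pos]
      push_cast at h1 ⊢
      linarith
    have hD : 0 ≤ pD n (k:ℕ) := Finset.sum_nonneg fun j _ => mul_self_nonneg _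
    have hc2 : 0 ≤ (c k)^2 := sq_nonneg _
    nlinarith [mul_le_mul_of_nonneg_right hle (mul_nonneg hc2 hD)]

section GraphCut
variable {n : ℕ} (G : SimpleGraph (Fin n)) [DecidableRel G.Adj] (σ : Equiv.Perm (Fin n)) (t : ℕ)

/-- ordered adjacent pairs crossing the cut after position `t` -/
def cutA : Finset (Fin n × Fin n) :=
  (Finset.univ ×ˢ Finset.univ).filter
    (fun p => G.Adj p.1 p.2 ∧ (σ.symm p.1 : ℕ) ≤ t ∧ t < (σ.symm p.2 : ℕ))

lemma edgeConn_le_cutA (ht : t + 1 < n) :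
    edgeConnectivity G ≤ (cutA G σ t).card := by
  classical
  set A := cutA G σ t with hA
  set e : Finset (Sym2 (Fin n)) := A.image (fun p => s(p.1, p.2)) with he
  have hecard : e.card = A.card := by
    apply Finset.card_image_of_injOn
    intro p hp q hq hpq
    simp only [hA, cutA, Finset.mem_coe, Finset.mem_filter] at hp hq
    rcases Sym2.eq_iff.mp hpq with ⟨h1, h2⟩ | ⟨h1, h2⟩
    · exact Prod.ext h1 h2
    · exfalso
      rw [h1, h2] at hp
      have := hp.2.2
      have := hq.2.2
      omega
  have hdisc : ¬ (G.deleteEdges ↑e).Connected := by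
    intro hcon
    set H := G.deleteEdges (↑e : Set (Sym2 (Fin n))) with hH
    have key : ∀ (a b : Fin n) (w : H.Walk a b), (σ.symm a : ℕ) ≤ t → (σ.symm b : ℕ) ≤ t := by
      intro a b w
      induction w with
      | nil => exact id
      | @cons u v _ hadj _ ih =>
        intro hu
        apply ih
        rw [hH, SimpleGraph.deleteEdges_adj] at hadj
        obtain ⟨hadj', hne⟩ := hadj
        by_contra hv
        push_neg at hv
        refine hne ?_
        refine Finset.mem_coe.mpr (Finset.mem_image.mpr ⟨(u, v), ?_, rfl⟩)
        simp only [hA, cutA, Finset.mem_filter, Finset.mem_product, Finset.mem_univ, true_and]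
        exact ⟨hadj', hu, hv⟩
    have h0n : 0 < n := by omega
    obtain ⟨w⟩ := hcon.preconnected (σ ⟨0, h0n⟩) (σ ⟨t+1, ht⟩)
    have := key _ _ w (by simp)
    simp at this
  calc edgeConnectivity G ≤ e.card := by
        apply Nat.sInf_le
        refine ⟨↑e, ?_, Set.ncard_coe_finset e, hdisc⟩
        intro z hz
        rw [Finset.mem_coe] at hz
        obtain ⟨p, hp, rfl⟩ := Finset.mem_image.mp hz
        simp only [hA, cutA, Finset.mem_filter] at hp
        exact hp.2.1
  _ = A.card := hecard

/-- all ordered adjacent pairs separated by position `t` -/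
def cutQ : Finset (Fin n × Fin n) :=
  (Finset.univ ×ˢ Finset.univ).filter
    (fun p => G.Adj p.1 p.2 ∧
      (((σ.symm p.1 : ℕ) ≤ t ∧ t < (σ.symm p.2 : ℕ)) ∨
       ((σ.symm p.2 : ℕ) ≤ t ∧ t < (σ.symm p.1 : ℕ))))

lemma cutQ_card (ht : t + 1 < n) : 2 * edgeConnectivity G ≤ (cutQ G σ t).card := by
  classical
  set A := cutA G σ t with hA
  set A' : Finset (Fin n × Fin n) := A.image Prod.swap with hA'
  have hsub : A ∪ A' ⊆ cutQ G σ t := by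
    intro p hp
    rcases Finset.mem_union.mp hp with h | h
    · simp only [hA, cutA, Finset.mem_filter] at h
      simp only [cutQ, Finset.mem_filter]
      exact ⟨h.1, h.2.1, Or.inl h.2.2⟩
    · obtain ⟨q, hq, rfl⟩ := Finset.mem_image.mp h
      simp only [hA, cutA, Finset.mem_filter] at hq
      simp only [cutQ, Finset.mem_filter, Prod.fst_swap, Prod.snd_swap]
      exact ⟨Finset.mem_product.mpr ⟨Finset.mem_univ _, Finset.mem_univ _⟩,
        hq.2.1.symm, Or.inr hq.2.2⟩
  have hdisj : Disjoint A A' := by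
    rw [Finset.disjoint_left]
    intro p hp hp'
    simp only [hA, cutA, Finset.mem_filter] at hp
    obtain ⟨q, hq, hqe⟩ := Finset.mem_image.mp hp'
    simp only [hA, cutA, Finset.mem_filter] at hq
    have h1 : q.2 = p.1 := congrArg Prod.fst hqe
    have h2 : q.1 = p.2 := congrArg Prod.snd hqe
    rw [h1] at hq
    rw [h2] at hq
    omega
  have hcard' : A'.card = A.card := Finset.card_image_of_injective _ Prod.swap_injective
  calc 2 * edgeConnectivity G ≤ 2 * A.card := by
        have := edgeConn_le_cutA G σ t ht
        rw [← hA] at this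
        omega
    _ = A.card + A'.card := by omega
    _ = (A ∪ A').card := (Finset.card_union_of_disjoint hdisj).symm
    _ ≤ (cutQ G σ t).card := Finset.card_le_card hsub

end GraphCut

lemma sumsq_le_sq_sum (s : Finset ℕ) (f : ℕ → ℝ) (hf : ∀ i ∈ s, 0 ≤ f i) :
    ∑ i ∈ s, (f i)^2 ≤ (∑ i ∈ s, f i)^2 := by
  have h1 : ∀ i ∈ s, (f i)^2 ≤ f i * ∑ j ∈ s, f j := by
    intro i hi
    rw [sq]
    apply mul_le_mul_of_nonneg_left _ (hf i hi)
    exact Finset.single_le_sum hf hi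
  calc ∑ i ∈ s, (f i)^2 ≤ ∑ i ∈ s, f i * ∑ j ∈ s, f j := Finset.sum_le_sum h1
    _ = (∑ i ∈ s, f i)^2 := by rw [← Finset.sum_mul, sq]

lemma telescope_sq (n : ℕ) (X : ℕ → ℝ) (hmono : ∀ a b, a ≤ b → b < n → X a ≤ X b)
    (p q : ℕ) (hpq : p < q) (hq : q < n) :
    ∑ t ∈ range (n-1), (if p ≤ t ∧ t < q then (X (t+1) - X t)^2 else 0)
      ≤ (X q - X p)^2 := by
  have hIco : ∀ t : ℕ, (p ≤ t ∧ t < q) ↔ t ∈ Finset.Ico p q := fun t => (Finset.mem_Ico).symm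
  have hsub : Finset.Ico p q ⊆ range (n-1) := by
    intro t ht
    rw [Finset.mem_Ico] at ht
    rw [Finset.mem_range]
    omega
  have h1 : ∑ t ∈ range (n-1), (if p ≤ t ∧ t < q then (X (t+1) - X t)^2 else 0)
      = ∑ t ∈ Finset.Ico p q, (X (t+1) - X t)^2 := by
    rw [Finset.sum_congr rfl (fun t _ => by rw [if_congr (hIco t) rfl rfl]),
      Finset.sum_ite_mem, Finset.inter_eq_right.mpr hsub]
  rw [h1]
  have htel : X q - X p = ∑ t ∈ Finset.Ico p q, (X (t+1) - X t) := by
    rw [Finset.sum_Ico_eq_sub _ hpq.le, Finset.sum_range_sub, Finset.sum_range_sub]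
    ring
  rw [htel]
  apply sumsq_le_sq_sum
  intro i hi
  rw [Finset.mem_Ico] at hi
  have := hmono i (i+1) (by omega) (by omega)
  linarith

lemma energy_bound {n : ℕ} (hn : 2 ≤ n) (G : SimpleGraph (Fin n)) [DecidableRel G.Adj]
    (x : Fin n → ℝ) (hsum : ∑ j, x j = 0) :
    2 * (edgeConnectivity G : ℝ) * (1 - Real.cos (Real.pi / n)) * (∑ j, x j * x j)
      ≤ (∑ i, ∑ j, if G.Adj i j then (x i - x j)^2 else 0) / 2 := by
  classical
  set σ := Tuple.sort x with hσ
  set X : ℕ → ℝ := fun j => if h : j < n then x (σ ⟨j, h⟩) else 0 with hX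
  have hXval : ∀ (j : ℕ) (h : j < n), X j = x (σ ⟨j, h⟩) := fun j h => dif_pos h
  have hmono : ∀ a b, a ≤ b → b < n → X a ≤ X b := by
    intro a b hab hb
    have ha : a < n := by omega
    rw [hXval a ha, hXval b hb]
    exact Tuple.monotone_sort x (show (⟨a, ha⟩ : Fin n) ≤ ⟨b, hb⟩ from hab)
  have hXofpos : ∀ i : Fin n, X ((σ.symm i : ℕ)) = x i := by
    intro i
    rw [hXval _ (σ.symm i).isLt]
    congr
    rw [Fin.eta]
    exact σ.apply_symm_apply i
  have pair_bound : ∀ i j : Fin n, G.Adj i j →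
      ∑ t ∈ range (n-1), (if (((σ.symm i : ℕ) ≤ t ∧ t < (σ.symm j : ℕ)) ∨
          ((σ.symm j : ℕ) ≤ t ∧ t < (σ.symm i : ℕ))) then (X (t+1) - X t)^2 else 0)
        ≤ (x i - x j)^2 := by
    intro i j hadj
    have hne : (σ.symm i : ℕ) ≠ (σ.symm j : ℕ) := by
      intro h
      exact G.ne_of_adj hadj (σ.symm.injective (Fin.val_injective h))
    rcases lt_or_gt_of_ne hne with h | h
    · have hcond : ∀ t : ℕ, ((((σ.symm i : ℕ) ≤ t ∧ t < (σ.symm j : ℕ)) ∨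
          ((σ.symm j : ℕ) ≤ t ∧ t < (σ.symm i : ℕ))) ↔
            ((σ.symm i : ℕ) ≤ t ∧ t < (σ.symm j : ℕ))) := by
        intro t; constructor
        · rintro (h' | h')
          · exact h'
          · omega
        · exact Or.inl
      rw [Finset.sum_congr rfl (fun t _ => by rw [if_congr (hcond t) rfl rfl])]
      have := telescope_sq n X hmono _ _ h (σ.symm j).isLt
      have heq : (X ((σ.symm j : ℕ)) - X ((σ.symm i : ℕ)))^2 = (x i - x j)^2 := by
        rw [hXofpos, hXofpos]; ring
      linarith
    · have hcond : ∀ t : ℕ, ((((σ.symm i : ℕ) ≤ t ∧ t < (σ.symm j : ℕ)) ∨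
          ((σ.symm j : ℕ) ≤ t ∧ t < (σ.symm i : ℕ))) ↔
            ((σ.symm j : ℕ) ≤ t ∧ t < (σ.symm i : ℕ))) := by
        intro t; constructor
        · rintro (h' | h')
          · omega
          · exact h'
        · exact Or.inr
      rw [Finset.sum_congr rfl (fun t _ => by rw [if_congr (hcond t) rfl rfl])]
      have := telescope_sq n X hmono _ _ h (σ.symm i).isLt
      have heq : (X ((σ.symm i : ℕ)) - X ((σ.symm j : ℕ)))^2 = (x i - x j)^2 := by
        rw [hXofpos, hXofpos]
      linarith
  set d : ℕ → ℝ := fun t => (X (t+1) - X t)^2 with hd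
  have hdnn : ∀ t, 0 ≤ d t := fun t => sq_nonneg _
  set S : ℝ := ∑ i, ∑ j, if G.Adj i j then (x i - x j)^2 else 0 with hS
  -- step 1 : crossing-sum ≤ S
  have h1 : ∑ i : Fin n, ∑ j : Fin n,
      (if G.Adj i j then (∑ t ∈ range (n-1),
        (if (((σ.symm i : ℕ) ≤ t ∧ t < (σ.symm j : ℕ)) ∨
          ((σ.symm j : ℕ) ≤ t ∧ t < (σ.symm i : ℕ))) then d t else 0)) else 0) ≤ S := by
    apply Finset.sum_le_sum
    intro i _
    apply Finset.sum_le_sum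
    intro j _
    by_cases hadj : G.Adj i j
    · rw [if_pos hadj, if_pos hadj]
      exact pair_bound i j hadj
    · rw [if_neg hadj, if_neg hadj]
  -- step 2 : rewrite as sum over t of card * d t
  have h2 : ∑ i : Fin n, ∑ j : Fin n,
      (if G.Adj i j then (∑ t ∈ range (n-1),
        (if (((σ.symm i : ℕ) ≤ t ∧ t < (σ.symm j : ℕ)) ∨
          ((σ.symm j : ℕ) ≤ t ∧ t < (σ.symm i : ℕ))) then d t else 0)) else 0)
      = ∑ t ∈ range (n-1), ((cutQ G σ t).card : ℝ) * d t := by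
    have e1 : ∀ i j : Fin n, (if G.Adj i j then (∑ t ∈ range (n-1),
        (if (((σ.symm i : ℕ) ≤ t ∧ t < (σ.symm j : ℕ)) ∨
          ((σ.symm j : ℕ) ≤ t ∧ t < (σ.symm i : ℕ))) then d t else 0)) else 0)
        = ∑ t ∈ range (n-1),
          (if (G.Adj i j ∧ ((((σ.symm i : ℕ) ≤ t ∧ t < (σ.symm j : ℕ)) ∨
          (((σ.symm j : ℕ) ≤ t ∧ t < (σ.symm i : ℕ)))))) then d t else 0) := by
      intro i j
      by_cases hadj : G.Adj i j <;> simp [hadj]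
    rw [Finset.sum_congr rfl fun i _ => Finset.sum_congr rfl fun j _ => e1 i j]
    rw [Finset.sum_congr rfl fun i (_ : i ∈ univ) => Finset.sum_comm]
    rw [Finset.sum_comm]
    refine Finset.sum_congr rfl fun t _ => ?_
    rw [← Finset.sum_product']
    rw [Finset.sum_ite, Finset.sum_const_zero, add_zero, Finset.sum_const, nsmul_eq_mul]
    congr 2
  -- step 3 : card bound
  have h3 : ∑ t ∈ range (n-1), ((2 * edgeConnectivity G : ℕ) : ℝ) * d t
      ≤ ∑ t ∈ range (n-1), ((cutQ G σ t).card : ℝ) * d t := by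
    apply Finset.sum_le_sum
    intro t ht
    rw [Finset.mem_range] at ht
    have := cutQ_card G σ t (by omega)
    apply mul_le_mul_of_nonneg_right _ (hdnn t)
    exact_mod_cast this
  -- step 4 : wirtinger
  have h4 : 2 * (1 - Real.cos (Real.pi / n)) * (∑ j, x j * x j)
      ≤ ∑ t ∈ range (n-1), d t := by
    have hsum' : ∑ j : Fin n, x (σ j) = 0 := by
      rw [Equiv.sum_comp σ x]; exact hsum
    have hnorm' : ∑ j : Fin n, x (σ j) * x (σ j) = ∑ j, x j * x j :=
      Equiv.sum_comp σ (fun i => x i * x i)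
    have := wirtinger n hn (fun j => x (σ j)) hsum' X (fun j h => hXval j h)
    rw [hnorm'] at this
    exact this
  have hκnn : (0:ℝ) ≤ (edgeConnectivity G : ℝ) := Nat.cast_nonneg _
  have hfinal : (edgeConnectivity G : ℝ) * (2 * (1 - Real.cos (Real.pi / n)) * (∑ j, x j * x j))
      ≤ (edgeConnectivity G : ℝ) * ∑ t ∈ range (n-1), d t :=
    mul_le_mul_of_nonneg_left h4 hκnn
  have hchain : ∑ t ∈ range (n-1), ((2 * edgeConnectivity G : ℕ) : ℝ) * d t
      = 2 * (edgeConnectivity G : ℝ) * ∑ t ∈ range (n-1), d t := by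
    rw [Finset.mul_sum]
    exact Finset.sum_congr rfl fun t _ => by push_cast; ring
  rw [hchain] at h3
  rw [h2] at h1
  linarith

theorem algConn_ge_edgeConnectivity_bound
    {n : ℕ} (G : SimpleGraph (Fin n)) (hG : G.Connected) :
    algebraicConnectivity G ≥
      2 * (edgeConnectivity G : ℝ) * (1 - Real.cos (Real.pi / n)) := by
  letI : DecidableRel G.Adj := Classical.decRel _
  have hn0 : 0 < n := by
    obtain ⟨v⟩ := hG.nonempty
    exact v.pos
  rcases Nat.lt_or_ge n 2 with h1 | h2
  · -- n = 1
    obtain rfl : n = 1 := by omega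
    have hedge : edgeConnectivity G = 0 := by
      unfold edgeConnectivity
      have hempty : {k : ℕ | ∃ s : Set (Sym2 (Fin 1)), s ⊆ G.edgeSet ∧ s.ncard = k ∧
          ¬ (G.deleteEdges s).Connected} = ∅ := by
        ext k
        simp only [Set.mem_setOf_eq, Set.mem_empty_iff_false, iff_false, not_exists]
        rintro s ⟨-, -, hdisc⟩
        apply hdisc
        have hpre : (G.deleteEdges s).Preconnected := by
          intro a b
          rw [Subsingleton.elim a b]
        exact SimpleGraph.Connected.mk hpre
      rw [hempty, Nat.sInf_empty]
    have halg : algebraicConnectivity G = 0 := by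
      unfold algebraicConnectivity
      have hempty : {r : ℝ | ∃ x : Fin 1 → ℝ, x ≠ 0 ∧ (∑ i, x i) = 0 ∧
          r = (x ⬝ᵥ ((G.lapMatrix ℝ).mulVec x)) / (x ⬝ᵥ x)} = ∅ := by
        ext r
        simp only [Set.mem_setOf_eq, Set.mem_empty_iff_false, iff_false, not_exists]
        rintro x ⟨hx0, hsum, -⟩
        apply hx0
        funext i
        rw [Subsingleton.elim i 0, Pi.zero_apply]
        rw [Fin.sum_univ_one] at hsum
        exact hsum
      rw [hempty, Real.sInf_empty]
    rw [halg, hedge]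
    norm_num
  · rw [ge_iff_le]
    unfold algebraicConnectivity
    apply le_csInf
    · have hne : (⟨0, by omega⟩ : Fin n) ≠ ⟨1, h2⟩ := by
        intro h
        have := congrArg Fin.val h
        simp at this
      refine ⟨_, ⟨Pi.single (⟨0, by omega⟩ : Fin n) (1:ℝ) - Pi.single ⟨1, h2⟩ 1, ?_, ?_, rfl⟩⟩
      · intro h
        have h0 := congrFun h ⟨0, by omega⟩
        simp only [Pi.sub_apply, Pi.single_eq_same, Pi.single_eq_of_ne hne, Pi.zero_apply] at h0
        norm_num at h0
      · simp only [Pi.sub_apply]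
        rw [Finset.sum_sub_distrib, Finset.sum_pi_single', Finset.sum_pi_single']
        simp
    · rintro r ⟨x, hx0, hsum, rfl⟩
      have hN' : (0:ℝ) < ∑ j, x j * x j := by
        obtain ⟨i, hi⟩ := Function.ne_iff.mp hx0
        refine Finset.sum_pos' (fun j _ => mul_self_nonneg _)
          ⟨i, Finset.mem_univ i, mul_self_pos.mpr ?_⟩
        simpa using hi
      have hNe : x ⬝ᵥ x = ∑ j, x j * x j := by simp [dotProduct]
      rw [le_div_iff₀ (by rw [hNe]; exact hN')]
      have hE : x ⬝ᵥ ((G.lapMatrix ℝ).mulVec x)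
          = (∑ i, ∑ j, if G.Adj i j then (x i - x j)^2 else 0) / 2 := by
        rw [← Matrix.toLinearMap₂'_apply', SimpleGraph.lapMatrix_toLinearMap₂']
      rw [hE, hNe]
      exact energy_bound h2 G x hsum
end

section
/- Let G be a connected simple graph on n vertices with algebraic connectivity a and diameter D. Then D ≥ 4/(n·a). -/
open Finset Real Matrix

section Aux

variable {V : Type*} [Fintype V] [DecidableEq V] {G : SimpleGraph V} [DecidableRel G.Adj]

/-- The double sum over adjacent pairs equals the sum over darts. -/
lemma aux_dart_sum_eq (x : V → ℝ) :
    (∑ i : V, ∑ j : V, if G.Adj i j then (x i - x j) ^ 2 else 0)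
      = ∑ d : G.Dart, (x d.fst - x d.snd) ^ 2 := by
  rw [← Fintype.sum_prod_type']
  rw [← Finset.sum_filter]
  refine (Finset.sum_bij (fun (d : G.Dart) _ => d.toProd) ?_ ?_ ?_ ?_).symm
  · intro d _
    simp [d.adj]
  · intro d₁ _ d₂ _ h
    exact SimpleGraph.Dart.toProd_injective h
  · intro pr hpr
    simp only [Finset.mem_filter, Finset.mem_univ, true_and] at hpr
    exact ⟨⟨pr, hpr⟩, Finset.mem_univ _, rfl⟩
  · intro d _
    rfl

lemma aux_quad_eq (x : V → ℝ) :
    x ⬝ᵥ (G.lapMatrix ℝ *ᵥ x) = (∑ d : G.Dart, (x d.fst - x d.snd) ^ 2) / 2 := by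
  have h := G.lapMatrix_toLinearMap₂' (R := ℝ) x
  rw [Matrix.toLinearMap₂'_apply'] at h
  rw [h, aux_dart_sum_eq]

lemma aux_darts_sum_nonneg (x : V → ℝ) {u v : V} (p : G.Walk u v) :
    0 ≤ (p.darts.map (fun d => (x d.fst - x d.snd) ^ 2)).sum := by
  apply List.sum_nonneg
  intro a ha
  obtain ⟨d, _, rfl⟩ := List.mem_map.mp ha
  positivity

/-- Cauchy–Schwarz along a walk. -/
lemma aux_walk_sq_bound (x : V → ℝ) {u v : V} (p : G.Walk u v) :
    (x u - x v) ^ 2 ≤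
      (p.length : ℝ) * (p.darts.map (fun d => (x d.fst - x d.snd) ^ 2)).sum := by
  induction p with
  | nil => simp
  | @cons a b c h q ih =>
    have hT : 0 ≤ (q.darts.map (fun d => (x d.fst - x d.snd) ^ 2)).sum :=
      aux_darts_sum_nonneg x q
    simp only [SimpleGraph.Walk.length_cons, SimpleGraph.Walk.darts_cons, List.map_cons,
      List.sum_cons, Nat.cast_add, Nat.cast_one]
    set L : ℝ := (q.length : ℝ) with hL
    set T : ℝ := (q.darts.map (fun d => (x d.fst - x d.snd) ^ 2)).sum with hTdef
    have hL0 : 0 ≤ L := by positivity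
    rcases Nat.eq_zero_or_pos q.length with h0 | hpos
    · have hLz : L = 0 := by simp [hL, h0]
      have hb2 : (x b - x c) ^ 2 ≤ 0 := by rw [hLz] at ih; linarith
      have hb : x b - x c = 0 := by nlinarith [sq_nonneg (x b - x c)]
      have hac : x a - x c = x a - x b := by linarith
      rw [hac, hLz]
      nlinarith [sq_nonneg (x a - x b)]
    · have hL1 : (1 : ℝ) ≤ L := by
        rw [hL]; exact_mod_cast hpos
      have hLpos : (0 : ℝ) < L := by linarith
      set A : ℝ := x a - x b with hA
      set B : ℝ := x b - x c with hB
      have hac : x a - x c = A + B := by rw [hA, hB]; ring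
      rw [hac]
      have key : L * ((L + 1) * (A ^ 2 + T) - (A + B) ^ 2)
          = (L + 1) * (L * T - B ^ 2) + (L * A - B) ^ 2 := by ring
      have h1 : 0 ≤ L * T - B ^ 2 := by linarith [ih]
      have h2 : 0 ≤ L * ((L + 1) * (A ^ 2 + T) - (A + B) ^ 2) := by
        rw [key]; positivity
      have h3 : 0 ≤ (L + 1) * (A ^ 2 + T) - (A + B) ^ 2 :=
        nonneg_of_mul_nonneg_right h2 hLpos
      linarith

lemma aux_trail_darts_sum_le (x : V → ℝ) {u v : V} {p : G.Walk u v} (hp : p.IsTrail) :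
    (p.darts.map (fun d => (x d.fst - x d.snd) ^ 2)).sum
      ≤ (∑ d : G.Dart, (x d.fst - x d.snd) ^ 2) / 2 := by
  classical
  set g : G.Dart → ℝ := fun d => (x d.fst - x d.snd) ^ 2 with hg
  have hgsymm : ∀ d : G.Dart, g d.symm = g d := by
    intro d
    simp only [hg]
    have h1 : d.symm.fst = d.snd := rfl
    have h2 : d.symm.snd = d.fst := rfl
    rw [h1, h2]; ring
  have hdnd : p.darts.Nodup := by
    have he : (p.darts.map SimpleGraph.Dart.edge).Nodup := hp.edges_nodup
    exact he.of_map _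
  have hinj : Function.Injective (SimpleGraph.Dart.symm : G.Dart → G.Dart) :=
    Function.Involutive.injective SimpleGraph.Dart.symm_symm
  set l : List G.Dart := p.darts ++ p.darts.map SimpleGraph.Dart.symm with hl
  have hnd : l.Nodup := by
    rw [hl, List.nodup_append]
    refine ⟨hdnd, hdnd.map hinj, ?_⟩
    intro d hd1 d' hd2 hdd
    subst hdd
    obtain ⟨c, hc, rfl⟩ := List.mem_map.mp hd2
    have hedges : (p.darts.map SimpleGraph.Dart.edge).Nodup := hp.edges_nodup
    have heq : c.symm.edge = c.edge := SimpleGraph.Dart.edge_symm c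
    have := List.inj_on_of_nodup_map hedges hd1 hc heq
    exact SimpleGraph.Dart.symm_ne c this
  have hsum2 : (l.map g).sum = 2 * (p.darts.map g).sum := by
    rw [hl, List.map_append, List.sum_append, List.map_map]
    have : (g ∘ SimpleGraph.Dart.symm) = g := funext hgsymm
    rw [this]; ring
  have hle : (l.map g).sum ≤ ∑ d : G.Dart, g d := by
    rw [← List.sum_toFinset _ hnd]
    apply Finset.sum_le_sum_of_subset_of_nonneg
    · intro d _; exact Finset.mem_univ d
    · intro d _ _; positivity
  have := hsum2 ▸ hle
  linarith

end Aux

/-- Key inequality: `4‖x‖² ≤ n · diam · (xᵀ L x)` for mean-zero `x`. -/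
lemma aux_key {n : ℕ} (G : SimpleGraph (Fin n)) [DecidableRel G.Adj] (hG : G.Connected)
    (x : Fin n → ℝ) (hx : x ≠ 0) (hs : (∑ i, x i) = 0) :
    4 * (x ⬝ᵥ x) ≤ (n : ℝ) * (G.diam : ℝ) * (x ⬝ᵥ (G.lapMatrix ℝ *ᵥ x)) := by
  have hne : Nonempty (Fin n) := by
    by_contra h
    rw [not_nonempty_iff] at h
    exact hx (funext fun i => (h.false i).elim)
  obtain ⟨u, -, hu⟩ := Finset.exists_max_image Finset.univ x Finset.univ_nonempty
  obtain ⟨v, -, hv⟩ := Finset.exists_min_image Finset.univ x Finset.univ_nonempty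
  set M : ℝ := x u with hM
  set m : ℝ := x v with hm
  have hu' : ∀ i, x i ≤ M := fun i => hu i (Finset.mem_univ i)
  have hv' : ∀ i, m ≤ x i := fun i => hv i (Finset.mem_univ i)
  -- ∑ x_i² ≤ -n m M
  have h1 : ∑ i, (x i) ^ 2 ≤ (n : ℝ) * (-(m * M)) := by
    have hterm : ∀ i ∈ Finset.univ, (x i) ^ 2 ≤ (M + m) * x i - m * M := by
      intro i _
      nlinarith [hu' i, hv' i]
    calc ∑ i, (x i) ^ 2 ≤ ∑ i, ((M + m) * x i - m * M) := Finset.sum_le_sum hterm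
      _ = (M + m) * (∑ i, x i) - (n : ℝ) * (m * M) := by
          rw [Finset.sum_sub_distrib, ← Finset.mul_sum]
          simp [Finset.card_univ]
      _ = (n : ℝ) * (-(m * M)) := by rw [hs]; ring
  have hxx : x ⬝ᵥ x = ∑ i, (x i) ^ 2 := by
    simp [dotProduct, pow_two]
  set Q : ℝ := ∑ d : G.Dart, (x d.fst - x d.snd) ^ 2 with hQdef
  have hQ : x ⬝ᵥ (G.lapMatrix ℝ *ᵥ x) = Q / 2 := aux_quad_eq x
  have hQ0 : 0 ≤ Q := by positivity
  -- diameter bound on (M - m)²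
  obtain ⟨p, hp, hlen⟩ := hG.exists_path_of_dist u v
  have hediam : G.ediam ≠ ⊤ := by
    obtain ⟨a, b, hab⟩ := G.exists_edist_eq_ediam_of_finite
    rw [← hab]
    exact SimpleGraph.edist_ne_top_iff_reachable.mpr (hG.preconnected a b)
  have hdle : G.dist u v ≤ G.diam := SimpleGraph.dist_le_diam hediam
  have hS := aux_walk_sq_bound x p
  have hSle := aux_trail_darts_sum_le x hp.isTrail
  have hlen' : (p.length : ℝ) ≤ (G.diam : ℝ) := by
    exact_mod_cast hlen ▸ hdle
  have hMm : (M - m) ^ 2 ≤ (G.diam : ℝ) * (Q / 2) := by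
    have hS0 : 0 ≤ (p.darts.map (fun d => (x d.fst - x d.snd) ^ 2)).sum :=
      aux_darts_sum_nonneg x p
    calc (M - m) ^ 2 = (x u - x v) ^ 2 := by rw [hM, hm]
      _ ≤ (p.length : ℝ) * (p.darts.map (fun d => (x d.fst - x d.snd) ^ 2)).sum := hS
      _ ≤ (p.length : ℝ) * (Q / 2) := by
          apply mul_le_mul_of_nonneg_left hSle (by positivity)
      _ ≤ (G.diam : ℝ) * (Q / 2) := by
          apply mul_le_mul_of_nonneg_right hlen' (by positivity)
  have hn0 : (0 : ℝ) ≤ (n : ℝ) := Nat.cast_nonneg n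
  have e1 : (n : ℝ) * (-(4 * (m * M))) ≤ (n : ℝ) * (M - m) ^ 2 :=
    mul_le_mul_of_nonneg_left (by nlinarith [sq_nonneg (M + m)]) hn0
  have e2 : (n : ℝ) * (M - m) ^ 2 ≤ (n : ℝ) * ((G.diam : ℝ) * (Q / 2)) :=
    mul_le_mul_of_nonneg_left hMm hn0
  rw [hxx, hQ]
  nlinarith [h1, e1, e2]

theorem diam_ge_four_div_n_mul_algConn
    {n : ℕ} (G : SimpleGraph (Fin n)) (hG : G.Connected) :
    (G.diam : ℝ) ≥ 4 / ((n : ℝ) * algebraicConnectivity G) := by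
  rcases le_or_gt (algebraicConnectivity G) 0 with ha | ha
  · refine le_trans ?_ (Nat.cast_nonneg _)
    exact div_nonpos_iff.mpr (Or.inl ⟨by norm_num,
      mul_nonpos_of_nonneg_of_nonpos (Nat.cast_nonneg n) ha⟩)
  · letI : DecidableRel G.Adj := Classical.decRel _
    set S : Set ℝ := {r : ℝ | ∃ x : Fin n → ℝ, x ≠ 0 ∧ (∑ i, x i) = 0 ∧
        r = (x ⬝ᵥ ((G.lapMatrix ℝ).mulVec x)) / (x ⬝ᵥ x)} with hSdef
    have hdef : algebraicConnectivity G = sInf S := rfl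
    have hSne : S.Nonempty := by
      by_contra h
      rw [Set.not_nonempty_iff_eq_empty] at h
      rw [hdef, h, Real.sInf_empty] at ha
      exact lt_irrefl 0 ha
    obtain ⟨r0, x0, hx0, hs0, -⟩ := id hSne
    have hn2 : 2 ≤ n := by
      by_contra h
      push_neg at h
      apply hx0
      funext i
      have hlt := i.isLt
      have hn1 : n = 1 := by omega
      have hall : ∀ j : Fin n, j = i := fun j => Fin.ext (by have := j.isLt; omega)
      have hsum : (0 : ℝ) = (n : ℝ) * x0 i := by
        calc (0 : ℝ) = ∑ j, x0 j := hs0.symm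
          _ = ∑ _j : Fin n, x0 i := Finset.sum_congr rfl (fun j _ => by rw [hall j])
          _ = (n : ℝ) * x0 i := by
              simp [Finset.card_univ, mul_comm]
      have : (n : ℝ) = 1 := by rw [hn1]; norm_num
      rw [this, one_mul] at hsum
      simpa using hsum.symm
    haveI hnt : Nontrivial (Fin n) := Fin.nontrivial_iff_two_le.mpr hn2
    have hediam : G.ediam ≠ ⊤ := by
      obtain ⟨a, b, hab⟩ := G.exists_edist_eq_ediam_of_finite
      rw [← hab]
      exact SimpleGraph.edist_ne_top_iff_reachable.mpr (hG.preconnected a b)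
    have hD1 : 1 ≤ G.diam := by
      obtain ⟨a, b, hab⟩ := exists_pair_ne (Fin n)
      have hpos : 0 < G.dist a b := hG.pos_dist_of_ne hab
      exact le_trans hpos (SimpleGraph.dist_le_diam hediam)
    have hDpos : (0 : ℝ) < (G.diam : ℝ) := by exact_mod_cast hD1
    have hnpos : (0 : ℝ) < (n : ℝ) := by
      have : (0 : ℕ) < n := lt_of_lt_of_le (by norm_num) hn2
      exact_mod_cast this
    have hkey : ∀ r ∈ S, 4 / ((n : ℝ) * (G.diam : ℝ)) ≤ r := by
      rintro r ⟨x, hx, hs, rfl⟩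
      have h4 := aux_key G hG x hx hs
      have hxxnn : 0 ≤ x ⬝ᵥ x := by
        have : x ⬝ᵥ x = ∑ i, (x i) ^ 2 := by simp [dotProduct, pow_two]
        rw [this]; positivity
      have hxx : 0 < x ⬝ᵥ x := by
        rcases lt_or_eq_of_le hxxnn with h | h
        · exact h
        · exact absurd (dotProduct_self_eq_zero.mp h.symm) hx
      rw [div_le_div_iff₀ (by positivity) hxx]
      nlinarith [h4]
    have halb : 4 / ((n : ℝ) * (G.diam : ℝ)) ≤ algebraicConnectivity G := by
      rw [hdef]
      exact le_csInf hSne hkey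
    rw [ge_iff_le, div_le_iff₀ (by positivity : (0 : ℝ) < (n : ℝ) * algebraicConnectivity G)]
    calc (4 : ℝ) = (n : ℝ) * (G.diam : ℝ) * (4 / ((n : ℝ) * (G.diam : ℝ))) := by
          field_simp
      _ ≤ (n : ℝ) * (G.diam : ℝ) * algebraicConnectivity G :=
          mul_le_mul_of_nonneg_left halb (by positivity)
      _ = (G.diam : ℝ) * ((n : ℝ) * algebraicConnectivity G) := by ring
end
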